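/- Let M be a positive integer, h > 0, L := M·h, and let v be a grid function on {0,…,M} with v₀ = v_M = 0. Then the discrete maximum norm satisfies ‖v‖_∞ ≤ (√L/2)·|v|₁. -/

import Mathlib

lemma telescope_aux (v : ℕ → ℝ) (hv0 : v 0 = 0) :
    ∀ i : ℕ, ∑ j ∈ Finset.Ioc 0 i, (v j - v (j - 1)) = v i := by
  intro i
  induction i with
  | zero => simp [hv0]
  | succ n ih =>
      rw [← Finset.Icc_add_one_left_eq_Ioc, zero_add] at ih ⊢
      rw [Finset.sum_Icc_succ_top (by omega : 1 ≤ n + 1), ih]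
      simp

/-- Discrete Sobolev embedding: for a grid function `v` on `{0,…,M}` vanishing at the
endpoints, the discrete maximum norm is bounded by `(√L / 2)` times the discrete
`H¹`-seminorm `|v|₁ = (h ∑_{i=1}^{M} ((vᵢ - v_{i-1})/h)²)^{1/2}`, where `L = M·h`. -/
theorem stmt_0 (M : ℕ) (hM : 0 < M) (h L : ℝ) (hh : 0 < h) (hL : L = M * h)
    (v : ℕ → ℝ) (hv0 : v 0 = 0) (hvM : v M = 0) :
    (Finset.range (M + 1)).sup' (Finset.nonempty_range_iff.mpr (Nat.succ_ne_zero M))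
        (fun i => |v i|) ≤
      Real.sqrt L / 2 *
        Real.sqrt (h * ∑ i ∈ Finset.Icc 1 M, ((v i - v (i - 1)) / h) ^ 2) := by
  set d : ℕ → ℝ := fun j => v j - v (j - 1) with hd
  set Q : ℝ := ∑ j ∈ Finset.Ioc 0 M, d j ^ 2 with hQ
  have hQ0 : 0 ≤ Q := Finset.sum_nonneg fun j _ => sq_nonneg _
  -- RHS equals √(M * Q) / 2
  have hrhs : Real.sqrt L / 2 *
      Real.sqrt (h * ∑ i ∈ Finset.Icc 1 M, ((v i - v (i - 1)) / h) ^ 2)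
      = Real.sqrt ((M : ℝ) * Q) / 2 := by
    have hIcc : Finset.Icc 1 M = Finset.Ioc 0 M := by
      rw [← Finset.Icc_add_one_left_eq_Ioc, zero_add]
    have hsum : h * ∑ i ∈ Finset.Icc 1 M, ((v i - v (i - 1)) / h) ^ 2 = Q / h := by
      rw [hIcc, Finset.mul_sum, hQ, Finset.sum_div]
      refine Finset.sum_congr rfl fun j _ => ?_
      field_simp
      ring
    rw [hsum, hL, div_mul_eq_mul_div, ← Real.sqrt_mul (by positivity)]
    congr 2
    field_simp
  rw [hrhs]
  apply Finset.sup'_le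
  intro i hi
  have hiM : i ≤ M := Nat.lt_succ_iff.mp (Finset.mem_range.mp hi)
  -- 2 |v i| ≤ ∑ |d|
  set S : ℝ := ∑ j ∈ Finset.Ioc 0 M, |d j| with hS
  have htel : ∀ k, ∑ j ∈ Finset.Ioc 0 k, d j = v k := telescope_aux v hv0
  have hsplit : (∑ j ∈ Finset.Ioc 0 i, d j) + ∑ j ∈ Finset.Ioc i M, d j
      = ∑ j ∈ Finset.Ioc 0 M, d j := Finset.sum_Ioc_consecutive _ (Nat.zero_le i) hiM
  have htail : ∑ j ∈ Finset.Ioc i M, d j = - v i := by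
    have := hsplit
    rw [htel i, htel M, hvM] at this
    linarith
  have h2 : 2 * |v i| ≤ S := by
    have h1 : |v i| ≤ ∑ j ∈ Finset.Ioc 0 i, |d j| := by
      rw [← htel i]; exact Finset.abs_sum_le_sum_abs _ _
    have h2' : |v i| ≤ ∑ j ∈ Finset.Ioc i M, |d j| := by
      have := Finset.abs_sum_le_sum_abs d (Finset.Ioc i M)
      rw [htail, abs_neg] at this
      exact this
    have hun : (∑ j ∈ Finset.Ioc 0 i, |d j|) + ∑ j ∈ Finset.Ioc i M, |d j| = S :=
      Finset.sum_Ioc_consecutive _ (Nat.zero_le i) hiM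
    linarith
  -- Cauchy-Schwarz: S² ≤ M * Q
  have hcs : S ^ 2 ≤ (M : ℝ) * Q := by
    have := sq_sum_le_card_mul_sum_sq (s := Finset.Ioc 0 M) (f := fun j => |d j|)
    simpa [hS, hQ, sq_abs, Nat.card_Ioc] using this
  have hS0 : 0 ≤ S := Finset.sum_nonneg fun j _ => abs_nonneg _
  have hSle : S ≤ Real.sqrt ((M : ℝ) * Q) := by
    rw [← Real.sqrt_sq hS0]
    exact Real.sqrt_le_sqrt hcs
  have : |v i| ≤ S / 2 := by linarith
  calc |v i| ≤ S / 2 := this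
    _ ≤ Real.sqrt ((M : ℝ) * Q) / 2 := by linarith
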